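/- Let (R, 𝒜, χ) be a measure space, let C ≥ 1, and let φ : R × [0,∞) → [0,∞) be jointly measurable such that for every r ∈ R the map α ↦ φ(r,α) is continuous, nondecreasing, satisfies φ(r,0) = 0, and satisfies φ(r,2α) ≤ C φ(r,α) for all α ≥ 0. Let f, g and f_k (k ∈ ℕ) be measurable real-valued functions on R such that f_k → f χ-almost everywhere, φ(r,|f_k(r)|) ≤ φ(r,|g(r)|) for χ-almost all r and all k, and ∫_R φ(r,|g(r)|) χ(dr) < ∞. Then ∫_R φ(r,|f_k(r) − f(r)|) χ(dr) → 0 as k → ∞. -/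

import Mathlib

open MeasureTheory Filter

/-- Dominated convergence for a Musielak–Orlicz modular under the Δ₂-condition:
if `φ(r,·)` is continuous, nondecreasing, vanishes at `0` and satisfies the doubling
condition `φ(r,2α) ≤ C φ(r,α)`, and if `f_k → f` χ-a.e. with the domination
`φ(r,|f_k(r)|) ≤ φ(r,|g(r)|)` and `∫ φ(r,|g(r)|) dχ < ∞`, then
`∫ φ(r,|f_k(r) − f(r)|) dχ → 0`. -/
theorem modular_dominated_convergence
    {R : Type*} [MeasurableSpace R] (χ : Measure R)
    (C : NNReal) (hC : 1 ≤ C)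
    (φ : R → NNReal → NNReal)
    (hmeas : Measurable fun p : R × NNReal => φ p.1 p.2)
    (hcont : ∀ r, Continuous (φ r))
    (hmono : ∀ r, Monotone (φ r))
    (h0 : ∀ r, φ r 0 = 0)
    (hΔ : ∀ r α, φ r (2 * α) ≤ C * φ r α)
    (f : ℕ → R → ℝ) (F g : R → ℝ)
    (hfk : ∀ k, Measurable (f k)) (hF : Measurable F) (hg : Measurable g)
    (hconv : ∀ᵐ r ∂χ, Tendsto (fun k => f k r) atTop (nhds (F r)))
    (hdom : ∀ᵐ r ∂χ, ∀ k, φ r ‖f k r‖₊ ≤ φ r ‖g r‖₊)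
    (hint : ∫⁻ r, (φ r ‖g r‖₊ : ENNReal) ∂χ < ⊤) :
    Tendsto (fun k => ∫⁻ r, (φ r ‖f k r - F r‖₊ : ENNReal) ∂χ) atTop (nhds 0) := by
  have hgmeas : Measurable fun r => (φ r ‖g r‖₊ : ENNReal) :=
    (hmeas.comp (measurable_id.prodMk hg.nnnorm)).coe_nnreal_ennreal
  have key : Tendsto (fun k => ∫⁻ r, (φ r ‖f k r - F r‖₊ : ENNReal) ∂χ) atTop
      (nhds (∫⁻ _r, (0 : ENNReal) ∂χ)) := by
    apply tendsto_lintegral_of_dominated_convergence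
      (fun r => (C : ENNReal) * (φ r ‖g r‖₊ : ENNReal))
    · intro k
      exact (hmeas.comp (measurable_id.prodMk ((hfk k).sub hF).nnnorm)).coe_nnreal_ennreal
    · intro k
      filter_upwards [hdom, hconv] with r hd hc
      have hF_le : φ r ‖F r‖₊ ≤ φ r ‖g r‖₊ := by
        have h1 : Tendsto (fun j => φ r ‖f j r‖₊) atTop (nhds (φ r ‖F r‖₊)) :=
          ((hcont r).tendsto _).comp ((continuous_nnnorm.tendsto _).comp hc)
        exact le_of_tendsto h1 (Eventually.of_forall hd)
      have h2 : ‖f k r - F r‖₊ ≤ 2 * max ‖f k r‖₊ ‖F r‖₊ := by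
        calc ‖f k r - F r‖₊ ≤ ‖f k r‖₊ + ‖F r‖₊ := nnnorm_sub_le _ _
          _ ≤ max ‖f k r‖₊ ‖F r‖₊ + max ‖f k r‖₊ ‖F r‖₊ :=
            add_le_add (le_max_left _ _) (le_max_right _ _)
          _ = 2 * max ‖f k r‖₊ ‖F r‖₊ := (two_mul _).symm
      have h3 : φ r ‖f k r - F r‖₊ ≤ C * φ r ‖g r‖₊ := by
        calc φ r ‖f k r - F r‖₊ ≤ φ r (2 * max ‖f k r‖₊ ‖F r‖₊) := hmono r h2
          _ ≤ C * φ r (max ‖f k r‖₊ ‖F r‖₊) := hΔ r _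
          _ = C * max (φ r ‖f k r‖₊) (φ r ‖F r‖₊) := by rw [(hmono r).map_max]
          _ ≤ C * φ r ‖g r‖₊ := by
            exact mul_le_mul_right (max_le (hd k) hF_le) C
      exact_mod_cast ENNReal.coe_le_coe.mpr h3
    · rw [lintegral_const_mul _ hgmeas]
      exact (ENNReal.mul_lt_top ENNReal.coe_lt_top hint).ne
    · filter_upwards [hconv] with r hc
      have h1 : Tendsto (fun k => ‖f k r - F r‖₊) atTop (nhds 0) := by
        have h0' : Tendsto (fun k => f k r - F r) atTop (nhds 0) := by
          simpa using hc.sub (tendsto_const_nhds (x := F r))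
        simpa [Function.comp_def] using (continuous_nnnorm.tendsto (0 : ℝ)).comp h0'
      have h2 : Tendsto (fun k => φ r ‖f k r - F r‖₊) atTop (nhds 0) := by
        have := ((hcont r).tendsto 0).comp h1
        simpa [h0 r, Function.comp_def] using this
      exact ENNReal.tendsto_coe.mpr h2
  simpa using key
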